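/- There exists a constant C > 0 such that for all positive integers m, Σ_{j=0}^{m} C(m,j) 2^{-m} log₂(2^m / C(m,j)) ≤ (log₂ m)/2 + C. -/

import Mathlib

set_option maxHeartbeats 1000000

open Finset


lemma sumA (n : ℕ) : 2 * ∑ j ∈ range (n+1), j * n.choose j = n * 2^n := by
  cases n with
  | zero => simp
  | succ k =>
    have h : ∑ j ∈ range (k+2), j * (k+1).choose j
        = ∑ i ∈ range (k+1), (i+1) * (k+1).choose (i+1) := by
      rw [Finset.sum_range_succ' (fun j => j * (k+1).choose j)]
      simp
    have h2 : ∀ i, (i+1) * (k+1).choose (i+1) = (k+1) * k.choose i := by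
      intro i
      have := (Nat.add_one_mul_choose_eq k i).symm
      simpa [Nat.succ_eq_add_one, mul_comm] using this
    rw [h]
    simp_rw [h2]
    rw [← Finset.mul_sum, Nat.sum_range_choose]
    ring

lemma sumB (n : ℕ) : 4 * ∑ j ∈ range (n+1), j^2 * n.choose j = n * (n+1) * 2^n := by
  cases n with
  | zero => simp
  | succ k =>
    have h : ∑ j ∈ range (k+2), j^2 * (k+1).choose j
        = ∑ i ∈ range (k+1), (i+1)^2 * (k+1).choose (i+1) := by
      rw [Finset.sum_range_succ' (fun j => j^2 * (k+1).choose j)]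
      simp
    have h2 : ∀ i, (i+1)^2 * (k+1).choose (i+1) = (k+1) * (i * k.choose i + k.choose i) := by
      intro i
      have h3 : (k+1).choose (i+1) * (i+1) = (k+1) * k.choose i :=
        (Nat.add_one_mul_choose_eq k i).symm
      calc (i+1)^2 * (k+1).choose (i+1) = (i+1) * ((k+1).choose (i+1) * (i+1)) := by ring
        _ = (i+1) * ((k+1) * k.choose i) := by rw [h3]
        _ = (k+1) * (i * k.choose i + k.choose i) := by ring
    rw [h]
    simp_rw [h2]
    rw [← Finset.mul_sum, Finset.sum_add_distrib, Nat.sum_range_choose]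
    have hA := sumA k
    calc 4 * ((k+1) * (∑ x ∈ range (k+1), x * k.choose x + 2^k))
        = 2*(k+1) * (2 * ∑ x ∈ range (k+1), x * k.choose x) + 4*(k+1)*2^k := by ring
      _ = 2*(k+1) * (k * 2^k) + 4*(k+1)*2^k := by rw [hA]
      _ = (k+1) * (k+1+1) * 2^(k+1) := by ring

lemma var_id (m : ℕ) : ∑ j ∈ range (m+1), (m.choose j : ℝ) * (2*(j:ℝ) - m)^2
    = (m : ℝ) * 2^m := by
  have e : ∀ j ∈ range (m+1), (m.choose j : ℝ) * (2*(j:ℝ) - m)^2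
      = 4 * ((j:ℝ)^2 * m.choose j) - 4*(m:ℝ)*((j:ℝ) * m.choose j) + (m:ℝ)^2 * m.choose j := by
    intro j _; ring
  have hA : (∑ j ∈ range (m+1), (j:ℝ) * m.choose j) = (m:ℝ) * 2^m / 2 := by
    have := congrArg (fun x : ℕ => (x : ℝ)) (sumA m)
    push_cast at this
    linarith [this]
  have hB : (∑ j ∈ range (m+1), (j:ℝ)^2 * m.choose j) = (m:ℝ) * ((m:ℝ)+1) * 2^m / 4 := by
    have := congrArg (fun x : ℕ => (x : ℝ)) (sumB m)
    push_cast at this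
    linarith [this]
  have hC : (∑ j ∈ range (m+1), (m.choose j : ℝ)) = 2^m := by
    have := congrArg (fun x : ℕ => (x : ℝ)) (Nat.sum_range_choose m)
    push_cast at this
    simpa using this
  calc ∑ j ∈ range (m+1), (m.choose j : ℝ) * (2*(j:ℝ) - m)^2
      = ∑ j ∈ range (m+1), (4 * ((j:ℝ)^2 * m.choose j) - 4*(m:ℝ)*((j:ℝ) * m.choose j)
          + (m:ℝ)^2 * m.choose j) := Finset.sum_congr rfl e
    _ = 4 * (∑ j ∈ range (m+1), (j:ℝ)^2 * m.choose j)
        - 4*(m:ℝ) * (∑ j ∈ range (m+1), (j:ℝ) * m.choose j)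
        + (m:ℝ)^2 * (∑ j ∈ range (m+1), (m.choose j : ℝ)) := by
      rw [Finset.sum_add_distrib, Finset.sum_sub_distrib, ← Finset.mul_sum, ← Finset.mul_sum,
        ← Finset.mul_sum]
    _ = (m:ℝ) * 2^m := by rw [hA, hB, hC]; ring


lemma Z_le (m : ℕ) (hm : 0 < m) :
    ∑ j ∈ range (m+1), (m:ℝ)/((m:ℝ) + (2*(j:ℝ) - m)^2) ≤ 8 * Real.sqrt m := by
  set g : ℕ → ℝ := fun d => (m:ℝ)/((m:ℝ) + (d:ℝ)^2) with hg
  have hmR : (0:ℝ) < m := by exact_mod_cast hm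
  have hgpos : ∀ d, 0 ≤ g d := fun d => by
    apply div_nonneg hmR.le; positivity
  have hg1 : ∀ d, g d ≤ 1 := fun d => by
    rw [hg]; dsimp only
    rw [div_le_one (by positivity)]; nlinarith [sq_nonneg (d:ℝ)]
  set s := Nat.sqrt m with hs
  have hsm : s ≤ m := Nat.sqrt_le_self m
  have hsqrt1 : (1:ℝ) ≤ Real.sqrt m := by
    rw [show (1:ℝ) = Real.sqrt 1 by simp]
    exact Real.sqrt_le_sqrt (by exact_mod_cast hm)
  have hsle : (s:ℝ) ≤ Real.sqrt m := by
    rw [Real.le_sqrt (by positivity) (by positivity)]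
    exact_mod_cast Nat.sqrt_le' m
  have hslt : Real.sqrt m ≤ (s:ℝ) + 1 := by
    have h1 : (m:ℝ) ≤ ((s:ℝ)+1)^2 := by exact_mod_cast (Nat.lt_succ_sqrt' m).le
    calc Real.sqrt m ≤ Real.sqrt (((s:ℝ)+1)^2) := Real.sqrt_le_sqrt h1
      _ = (s:ℝ)+1 := Real.sqrt_sq (by positivity)
  -- T bound
  have hT : ∑ d ∈ range (m+1), g d ≤ 4 * Real.sqrt m := by
    have hsplit : range (m+1) = range (s+1) ∪ Ioo s (m+1) := by
      ext x; simp only [mem_range, mem_union, mem_Ioo]; omega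
    have hdisj : Disjoint (range (s+1)) (Ioo s (m+1)) := by
      simp only [Finset.disjoint_left, mem_range, mem_Ioo]; omega
    rw [hsplit, Finset.sum_union hdisj]
    have h1 : ∑ d ∈ range (s+1), g d ≤ 2 * Real.sqrt m := by
      calc ∑ d ∈ range (s+1), g d ≤ ∑ _d ∈ range (s+1), (1:ℝ) :=
            Finset.sum_le_sum (fun d _ => hg1 d)
        _ = ((s+1 : ℕ) : ℝ) := by simp
        _ ≤ Real.sqrt m + Real.sqrt m := by push_cast; linarith
        _ = 2 * Real.sqrt m := by ring
    have h2 : ∑ d ∈ Ioo s (m+1), g d ≤ 2 * Real.sqrt m := by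
      have hterm : ∀ d ∈ Ioo s (m+1), g d ≤ (m:ℝ) * ((d:ℝ)^2)⁻¹ := by
        intro d hd
        rw [mem_Ioo] at hd
        have hd0 : 0 < d := lt_of_le_of_lt (Nat.zero_le s) hd.1
        have hdR : (0:ℝ) < (d:ℝ)^2 := by positivity
        rw [hg]; dsimp only
        rw [← div_eq_mul_inv]
        apply div_le_div_of_nonneg_left hmR.le hdR
        nlinarith
      calc ∑ d ∈ Ioo s (m+1), g d ≤ ∑ d ∈ Ioo s (m+1), (m:ℝ) * ((d:ℝ)^2)⁻¹ :=
            Finset.sum_le_sum hterm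
        _ = (m:ℝ) * ∑ d ∈ Ioo s (m+1), ((d:ℝ)^2)⁻¹ := by
            rw [Finset.mul_sum]
        _ ≤ (m:ℝ) * (2 / ((s:ℝ)+1)) := by
            apply mul_le_mul_of_nonneg_left _ hmR.le
            exact_mod_cast sum_Ioo_inv_sq_le (α := ℝ) s (m+1)
        _ ≤ 2 * Real.sqrt m := by
            have hdd : (m:ℝ)/((s:ℝ)+1) ≤ Real.sqrt m := by
              rw [div_le_iff₀ (by positivity)]
              nlinarith [Real.mul_self_sqrt hmR.le, Real.sqrt_nonneg (m:ℝ)]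
            calc (m:ℝ) * (2/((s:ℝ)+1)) = 2 * ((m:ℝ)/((s:ℝ)+1)) := by ring
              _ ≤ 2 * Real.sqrt m := by linarith
    linarith
  -- reindex halves
  set A := (range (m+1)).filter (fun j => 2*j ≤ m) with hA
  set B := (range (m+1)).filter (fun j => ¬ 2*j ≤ m) with hB
  have hAB : ∑ j ∈ range (m+1), (m:ℝ)/((m:ℝ) + (2*(j:ℝ) - m)^2)
      = ∑ j ∈ A, (m:ℝ)/((m:ℝ) + (2*(j:ℝ) - m)^2)
      + ∑ j ∈ B, (m:ℝ)/((m:ℝ) + (2*(j:ℝ) - m)^2) :=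
    (Finset.sum_filter_add_sum_filter_not _ _ _).symm
  have hAg : ∀ j ∈ A, (m:ℝ)/((m:ℝ) + (2*(j:ℝ) - m)^2) = g (m - 2*j) := by
    intro j hj
    rw [hA, mem_filter, mem_range] at hj
    have : ((m - 2*j : ℕ) : ℝ) = (m:ℝ) - 2*j := by
      push_cast [Nat.cast_sub hj.2]; ring
    rw [hg]; dsimp only; rw [this]; ring_nf
  have hBg : ∀ j ∈ B, (m:ℝ)/((m:ℝ) + (2*(j:ℝ) - m)^2) = g (2*j - m) := by
    intro j hj
    rw [hB, mem_filter, mem_range] at hj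
    have h2 : m ≤ 2*j := by omega
    have : ((2*j - m : ℕ) : ℝ) = 2*(j:ℝ) - m := by
      push_cast [Nat.cast_sub h2]; ring
    rw [hg]; dsimp only; rw [this]
  have hAle : ∑ j ∈ A, (m:ℝ)/((m:ℝ) + (2*(j:ℝ) - m)^2) ≤ ∑ d ∈ range (m+1), g d := by
    rw [Finset.sum_congr rfl hAg]
    have himg : ∑ x ∈ A, g (m - 2*x) = ∑ d ∈ A.image (fun j => m - 2*j), g d :=
      (Finset.sum_image (fun x hx y hy hxy => by
        simp only [hA, Finset.mem_coe, mem_filter, mem_range] at hx hy; omega)).symm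
    rw [himg]
    apply Finset.sum_le_sum_of_subset_of_nonneg
    · intro d hd
      simp only [Finset.mem_image] at hd
      obtain ⟨j, hj, rfl⟩ := hd
      rw [mem_range]; omega
    · intro d _ _; exact hgpos d
  have hBle : ∑ j ∈ B, (m:ℝ)/((m:ℝ) + (2*(j:ℝ) - m)^2) ≤ ∑ d ∈ range (m+1), g d := by
    rw [Finset.sum_congr rfl hBg]
    have himg : ∑ x ∈ B, g (2*x - m) = ∑ d ∈ B.image (fun j => 2*j - m), g d :=
      (Finset.sum_image (fun x hx y hy hxy => by
        simp only [hB, Finset.mem_coe, mem_filter, mem_range] at hx hy; omega)).symm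
    rw [himg]
    apply Finset.sum_le_sum_of_subset_of_nonneg
    · intro d hd
      simp only [Finset.mem_image] at hd
      obtain ⟨j, hj, rfl⟩ := hd
      simp only [hB, mem_filter, mem_range] at hj
      rw [mem_range]; omega
    · intro d _ _; exact hgpos d
  linarith

/-- The entropy of a binomial(m, 1/2) random variable is at most `(log₂ m)/2 + C`
for some absolute constant `C > 0`. -/


theorem binomial_entropy_bound :
    ∃ C : ℝ, 0 < C ∧ ∀ m : ℕ, 0 < m →
      ∑ j ∈ Finset.range (m + 1),
        ((m.choose j : ℝ) / 2 ^ m) * Real.logb 2 ((2 : ℝ) ^ m / (m.choose j : ℝ)) ≤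
        Real.logb 2 m / 2 + C := by
  have hlog2 : 0 < Real.log 2 := Real.log_pos (by norm_num)
  refine ⟨3 + (Real.log 2)⁻¹, by positivity, ?_⟩
  intro m hm
  have hmR : (0:ℝ) < m := by exact_mod_cast hm
  set P : ℝ := (2:ℝ)^m with hP
  have hPpos : (0:ℝ) < P := by positivity
  set w : ℕ → ℝ := fun j => (m:ℝ)/((m:ℝ) + (2*(j:ℝ) - m)^2) with hw
  have hwpos : ∀ j, 0 < w j := fun j => by
    rw [hw]; dsimp only; positivity
  set Z : ℝ := ∑ j ∈ range (m+1), w j with hZ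
  have hZpos : 0 < Z := Finset.sum_pos (fun j _ => hwpos j) ⟨0, by simp⟩
  have hcpos : ∀ j ∈ range (m+1), (0:ℝ) < (m.choose j : ℝ) := by
    intro j hj; rw [mem_range] at hj
    exact_mod_cast Nat.choose_pos (by omega)
  have hC : ∑ j ∈ range (m+1), (m.choose j : ℝ) = P := by
    have := congrArg (fun x : ℕ => (x : ℝ)) (Nat.sum_range_choose m)
    push_cast at this
    simpa [hP] using this
  -- pointwise bound
  have key : ∀ j ∈ range (m+1),
      ((m.choose j : ℝ)/P) * Real.logb 2 (P / (m.choose j : ℝ))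
      ≤ (w j / Z - (m.choose j : ℝ)/P) / Real.log 2
        + ((m.choose j : ℝ)/P) * Real.logb 2 Z
        + ((m.choose j : ℝ) * (2*(j:ℝ)-(m:ℝ))^2) / (P * m * Real.log 2) := by
    intro j hj
    have hc := hcpos j hj
    set c : ℝ := (m.choose j : ℝ) with hcdef
    set d2 : ℝ := (2*(j:ℝ)-(m:ℝ))^2 with hd2
    have hd2nn : 0 ≤ d2 := sq_nonneg _
    have hwj : w j = (m:ℝ)/((m:ℝ) + d2) := by rw [hw]
    have hsplit : P / c = (w j/(Z * (c/P))) * Z * (1 + d2/m) := by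
      rw [hwj]; field_simp
    have hcp : 0 < c/P := div_pos hc hPpos
    have h1pos : 0 < w j/(Z * (c/P)) := div_pos (hwpos j) (mul_pos hZpos hcp)
    have h3pos : (0:ℝ) < 1 + d2/m := by
      have := div_nonneg hd2nn hmR.le; linarith
    have hlogsplit : Real.log (P/c)
        = Real.log (w j/(Z * (c/P))) + Real.log Z + Real.log (1 + d2/m) := by
      rw [hsplit, Real.log_mul (mul_pos h1pos hZpos).ne' h3pos.ne',
        Real.log_mul h1pos.ne' hZpos.ne']
    have hb1 : Real.log (w j/(Z * (c/P))) ≤ w j/(Z * (c/P)) - 1 :=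
      Real.log_le_sub_one_of_pos h1pos
    have hb2 : Real.log (1 + d2/m) ≤ d2/m := by
      have := Real.log_le_sub_one_of_pos h3pos
      linarith
    have hlogle : Real.log (P/c) ≤ (w j/(Z * (c/P)) - 1) + Real.log Z + d2/m := by
      rw [hlogsplit]; linarith
    rw [← Real.log_div_log, ← Real.log_div_log]
    rw [div_eq_mul_inv, div_eq_mul_inv (Real.log Z)]
    have step : (c/P) * (Real.log (P/c) * (Real.log 2)⁻¹)
        ≤ (c/P) * (((w j/(Z * (c/P)) - 1) + Real.log Z + d2/m) * (Real.log 2)⁻¹) := by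
      apply mul_le_mul_of_nonneg_left _ hcp.le
      exact mul_le_mul_of_nonneg_right hlogle (inv_nonneg.mpr hlog2.le)
    refine step.trans (le_of_eq ?_)
    have hne : Z * (c/P) ≠ 0 := (mul_pos hZpos hcp).ne'
    field_simp
  have hsum := Finset.sum_le_sum key
  -- compute RHS sum
  have hS1 : ∑ j ∈ range (m+1), (w j / Z - (m.choose j : ℝ)/P) / Real.log 2 = 0 := by
    rw [← Finset.sum_div, Finset.sum_sub_distrib, ← Finset.sum_div, ← Finset.sum_div, ← hZ,
      div_self hZpos.ne', hC, div_self hPpos.ne']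
    simp
  have hS2 : ∑ j ∈ range (m+1), ((m.choose j : ℝ)/P) * Real.logb 2 Z = Real.logb 2 Z := by
    rw [← Finset.sum_mul, ← Finset.sum_div, hC, div_self hPpos.ne', one_mul]
  have hS3 : ∑ j ∈ range (m+1), ((m.choose j : ℝ) * (2*(j:ℝ)-(m:ℝ))^2) / (P * m * Real.log 2)
      = (Real.log 2)⁻¹ := by
    rw [← Finset.sum_div, var_id m, hP,
      show (2:ℝ)^m * (m:ℝ) * Real.log 2 = ((m:ℝ) * 2^m) * Real.log 2 by ring,
      div_mul_eq_div_div, div_self (by positivity : ((m:ℝ) * 2^m) ≠ 0), one_div]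
  rw [Finset.sum_add_distrib, Finset.sum_add_distrib, hS1, hS2, hS3, zero_add] at hsum
  -- bound logb Z
  have hZle : Z ≤ 8 * Real.sqrt m := Z_le m hm
  have hlogZ : Real.logb 2 Z ≤ 3 + Real.logb 2 m / 2 := by
    have h1 : Real.logb 2 Z ≤ Real.logb 2 (8 * Real.sqrt m) :=
      Real.logb_le_logb_of_le (by norm_num) hZpos hZle
    have hsq : (0:ℝ) < Real.sqrt m := Real.sqrt_pos.mpr hmR
    have h2 : Real.logb 2 (8 * Real.sqrt m) = Real.logb 2 8 + Real.logb 2 (Real.sqrt m) :=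
      Real.logb_mul (by norm_num) hsq.ne'
    have h3 : Real.logb 2 8 = 3 := by
      rw [show (8:ℝ) = 2^(3:ℕ) by norm_num, ← Real.log_div_log, Real.log_pow]
      field_simp; norm_num
    have h4 : Real.logb 2 (Real.sqrt m) = Real.logb 2 m / 2 := by
      rw [← Real.log_div_log, ← Real.log_div_log, Real.log_sqrt hmR.le]
      ring
    rw [h2, h3, h4] at h1
    linarith
  calc ∑ j ∈ Finset.range (m + 1),
        ((m.choose j : ℝ) / 2 ^ m) * Real.logb 2 ((2 : ℝ) ^ m / (m.choose j : ℝ))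
      ≤ Real.logb 2 Z + (Real.log 2)⁻¹ := hsum
    _ ≤ Real.logb 2 m / 2 + (3 + (Real.log 2)⁻¹) := by linarith
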